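/- Let R be a finite nonempty set of rays in the plane with pairwise distinct apices and pairwise linearly independent direction vectors. Then the closure of the union of all Voronoi regions covers the plane: closure(⋃_{r ∈ R} rreg(r)) = ℝ². -/

import Mathlib

noncomputable section

open Real

abbrev Pt : Type := EuclideanSpace ℝ (Fin 2)

instance : Fact (Module.finrank ℝ Pt = 2) := ⟨finrank_euclideanSpace_fin⟩

noncomputable def stdOrient : Orientation ℝ Pt (Fin 2) :=
  (EuclideanSpace.basisFun (Fin 2) ℝ).toBasis.orientation

/-- A ray in the plane, given by its apex and its direction vector. -/
structure Ray2 where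
  apex : Pt
  dir : Pt

/-- The set of points of a ray. -/
def Ray2.carrier (r : Ray2) : Set Pt := {x | ∃ t : ℝ, 0 ≤ t ∧ x = r.apex + t • r.dir}

/-- The representative in `[0, 2π)` of an angle. -/
noncomputable def angleIco (θ : Real.Angle) : ℝ :=
  if 0 ≤ θ.toReal then θ.toReal else θ.toReal + 2 * π

open Classical in
/-- The counterclockwise angular distance from a point `x` to a ray `r`. -/
noncomputable def adist (x : Pt) (r : Ray2) : ℝ :=
  if x = r.apex then 0 else angleIco (stdOrient.oangle r.dir (x - r.apex))

/-- The Voronoi region of a ray `r` in a finite set of rays `R`. -/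
def rreg (R : Finset Ray2) (r : Ray2) : Set Pt :=
  {x | ∀ s ∈ R, s ≠ r → adist x r < adist x s}

/-- The rotating rays Voronoi diagram. -/
def RVD (R : Finset Ray2) : Set Pt :=
  (Set.univ \ ⋃ r ∈ R, rreg R r) ∪ ⋃ r ∈ R, r.carrier

/-- The point of the plane with the given coordinates. -/
noncomputable def pt (a b : ℝ) : Pt := (WithLp.equiv 2 (Fin 2 → ℝ)).symm ![a, b]

/-! ### Auxiliary lemmas -/

instance : Module.Oriented ℝ Pt (Fin 2) := ⟨stdOrient⟩

open EuclideanGeometry MeasureTheory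

lemma angleIco_injective : Function.Injective angleIco := by
  intro θ φ h
  have h1 := Real.Angle.toReal_le_pi θ
  have h2 := Real.Angle.neg_pi_lt_toReal θ
  have h3 := Real.Angle.toReal_le_pi φ
  have h4 := Real.Angle.neg_pi_lt_toReal φ
  have hpi := Real.pi_pos
  unfold angleIco at h
  split_ifs at h with ha hb hb <;>
    [skip; (exfalso; linarith); (exfalso; linarith); skip] <;>
  · apply Real.Angle.toReal_injective; linarith

/-- The tie set of two suitable rays is contained in two points plus a circle locus. -/
lemma tie_null (r s : Ray2) (hapex : r.apex ≠ s.apex)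
    (hdir : LinearIndependent ℝ ![r.dir, s.dir]) :
    volume {x : Pt | adist x r = adist x s} = 0 := by
  set p := r.apex
  set q := s.apex
  set u := r.dir
  set v := s.dir
  have hu : u ≠ 0 := hdir.ne_zero 0
  have hv : v ≠ 0 := hdir.ne_zero 1
  -- the fixed angle
  set θ₀ : Real.Angle := stdOrient.oangle v u with hθ₀
  have hA := (stdOrient.oangle_ne_zero_and_ne_pi_iff_linearIndependent (x := u) (y := v)).2 hdir
  have hθrev : θ₀ = -(stdOrient.oangle u v) := by rw [hθ₀, stdOrient.oangle_rev]
  have hθne0 : θ₀ ≠ 0 := by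
    intro h; apply hA.1
    rw [hθrev] at h; simpa using neg_eq_zero.1 h
  have hθnepi : θ₀ ≠ (π : Real.Angle) := by
    intro h; apply hA.2
    rw [hθrev, neg_eq_iff_eq_neg] at h
    rw [h, Real.Angle.neg_coe_pi]
  -- the locus of points seeing the segment `q p` under oriented angle `θ₀`
  set L : Set Pt := {x | x ≠ p ∧ x ≠ q ∧ ∡ q x p = θ₀} with hL
  have hsub : {x : Pt | adist x r = adist x s} ⊆ ({p} ∪ {q}) ∪ L := by
    intro x hx
    by_cases hxp : x = p
    · exact Or.inl (Or.inl hxp)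
    by_cases hxq : x = q
    · exact Or.inl (Or.inr hxq)
    refine Or.inr ⟨hxp, hxq, ?_⟩
    have hxp' : x - p ≠ 0 := sub_ne_zero.2 hxp
    have hxq' : x - q ≠ 0 := sub_ne_zero.2 hxq
    have hx' : stdOrient.oangle u (x - p) = stdOrient.oangle v (x - q) := by
      apply angleIco_injective
      have e1 : adist x r = angleIco (stdOrient.oangle u (x - p)) := by
        rw [adist, if_neg hxp]
      have e2 : adist x s = angleIco (stdOrient.oangle v (x - q)) := by
        rw [adist, if_neg hxq]
      rw [← e1, ← e2]; exact hx
    have hoa : ∡ q x p = stdOrient.oangle (x - q) (x - p) := by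
      show stdOrient.oangle (q -ᵥ x) (p -ᵥ x) = _
      rw [vsub_eq_sub, vsub_eq_sub, ← neg_sub x q, ← neg_sub x p,
        stdOrient.oangle_neg_neg]
    rw [hoa]
    have e3 : stdOrient.oangle (x - q) v + stdOrient.oangle v (x - p) =
        stdOrient.oangle (x - q) (x - p) := stdOrient.oangle_add hxq' hv hxp'
    have e4 : stdOrient.oangle v u + stdOrient.oangle u (x - p) =
        stdOrient.oangle v (x - p) := stdOrient.oangle_add hv hu hxp'
    have e5 : stdOrient.oangle (x - q) v = -stdOrient.oangle v (x - q) :=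
      stdOrient.oangle_rev v (x - q)
    rw [← e3, ← e4, hx', e5, hθ₀]
    abel
  refine measure_mono_null hsub ?_
  refine measure_union_null (measure_union_null ?_ ?_) ?_
  · exact measure_singleton p
  · exact measure_singleton q
  · rcases L.eq_empty_or_nonempty with hLe | ⟨x₀, hx₀⟩
    · simp [hLe]
    · have hnc : ¬Collinear ℝ ({q, x₀, p} : Set Pt) := by
        intro hc
        rcases EuclideanGeometry.oangle_eq_zero_or_eq_pi_iff_collinear.2 hc with h | h
        · exact hθne0 (hx₀.2.2 ▸ h)
        · exact hθnepi (hx₀.2.2 ▸ h)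
      let t : Affine.Triangle ℝ Pt := ⟨![q, x₀, p], affineIndependent_iff_not_collinear_set.2 hnc⟩
      have hsub2 : L ⊆ Metric.sphere t.circumsphere.center t.circumsphere.radius := by
        intro x hx
        have hmem : x ∈ t.circumsphere := by
          refine Affine.Triangle.mem_circumsphere_of_two_zsmul_oangle_eq
            (t := t) (p := x) (i₁ := 0) (i₂ := 1) (i₃ := 2)
            (by decide) (by decide) (by decide) ?_
          have h0 : t.points 0 = q := rfl
          have h1 : t.points 1 = x₀ := rfl
          have h2 : t.points 2 = p := rfl
          rw [h0, h1, h2, hx.2.2, hx₀.2.2]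
        rw [EuclideanGeometry.mem_sphere] at hmem
        exact hmem
      exact measure_mono_null hsub2 (Measure.addHaar_sphere volume _ _)

theorem stmt12 (R : Finset Ray2) (hR : R.Nonempty)
    (hapex : ∀ r ∈ R, ∀ s ∈ R, r ≠ s → r.apex ≠ s.apex)
    (hdir : ∀ r ∈ R, ∀ s ∈ R, r ≠ s → LinearIndependent ℝ ![r.dir, s.dir]) :
    closure (⋃ r ∈ R, rreg R r) = Set.univ := by
  rw [← dense_iff_closure_eq]
  set N : Set Pt := ⋃ r ∈ R, ⋃ s ∈ R, {x : Pt | r ≠ s ∧ adist x r = adist x s} with hN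
  have hNnull : volume N = 0 := by
    refine le_antisymm ?_ zero_le
    calc volume N ≤ ∑ r ∈ R, volume (⋃ s ∈ R, {x : Pt | r ≠ s ∧ adist x r = adist x s}) :=
          measure_biUnion_finset_le R _
      _ = 0 := by
          refine Finset.sum_eq_zero fun r hr => ?_
          refine le_antisymm ?_ zero_le
          calc volume (⋃ s ∈ R, {x : Pt | r ≠ s ∧ adist x r = adist x s})
              ≤ ∑ s ∈ R, volume {x : Pt | r ≠ s ∧ adist x r = adist x s} :=
                measure_biUnion_finset_le R _
            _ = 0 := by
                refine Finset.sum_eq_zero fun s hs => ?_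
                by_cases hrs : r = s
                · simp [hrs]
                · refine measure_mono_null (fun x hx => hx.2) ?_
                  exact tie_null r s (hapex r hr s hs hrs) (hdir r hr s hs hrs)
  have hcompl : (⋃ r ∈ R, rreg R r)ᶜ ⊆ N := by
    intro x hx
    by_contra hxN
    apply hx
    obtain ⟨r₀, hr₀R, hmin⟩ := R.exists_min_image (adist x) hR
    refine Set.mem_iUnion₂.2 ⟨r₀, hr₀R, ?_⟩
    intro s hs hsne
    refine lt_of_le_of_ne (hmin s hs) fun heq => ?_
    exact hxN (Set.mem_iUnion₂.2 ⟨r₀, hr₀R, Set.mem_iUnion₂.2 ⟨s, hs, ⟨hsne.symm, heq⟩⟩⟩)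
  rw [dense_iff_inter_open]
  intro U hU hUne
  by_contra hint
  rw [Set.not_nonempty_iff_eq_empty] at hint
  have hUsub : U ⊆ N := by
    intro x hxU
    refine hcompl fun hxS => ?_
    exact Set.eq_empty_iff_forall_notMem.1 hint x ⟨hxU, hxS⟩
  have h0 : volume U = 0 := measure_mono_null hUsub hNnull
  have hpos : 0 < volume U := hU.measure_pos volume hUne
  rw [h0] at hpos
  exact lt_irrefl 0 hpos
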